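/- Let $D \subseteq \mathbb{C}^n$ be an open set, let $S \subseteq \mathbb{C}$ be a nonempty open connected set, and let $f : S \to \mathbb{C}^n$ be a holomorphic map with $f(S) \subseteq D$ whose first component $f_1$ satisfies $f_1'(\xi_0) \neq 0$ for some $\xi_0 \in S$. Let $\psi : D \to \ell^2(\mathbb{N}, \mathbb{C})$ be a map for which there exist an injection $\alpha : \mathbb{N} \to \mathbb{N}$ and a linearly independent family of polynomials $(P_k)_{k \in \mathbb{N}}$ in $\mathbb{C}[X]$ such that $\psi(z)(\alpha(k)) = P_k(z_1)$ for every $z = (z_1, \dots, z_n) \in D$ and every $k \in \mathbb{N}$. Then the $\mathbb{C}$-linear span of the set $\{\psi(f(\xi)) : \xi \in S\}$ in $\ell^2(\mathbb{N}, \mathbb{C})$ is not finite-dimensional. -/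

import Mathlib

/-- Non-degeneracy of `Φ ∘ f`: let `D ⊆ ℂⁿ` be open, `S ⊆ ℂ` nonempty open connected,
`f : S → D` holomorphic with first component having nonvanishing derivative at some
point of `S`, and let `ψ : D → ℓ²(ℕ, ℂ)` be such that for an injection `α : ℕ → ℕ`
and a linearly independent family of polynomials `(P_k)` one has
`ψ(z)(α k) = P_k(z₁)` on `D`. Then the span of `{ψ (f ξ) : ξ ∈ S}` in `ℓ²(ℕ, ℂ)`
is not finite-dimensional. -/
theorem not_finiteDimensional_span_psi_comp_f (n : ℕ) (hn : 0 < n)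
    (D : Set (Fin n → ℂ)) (hDo : IsOpen D)
    (S : Set ℂ) (hSo : IsOpen S) (hSc : IsConnected S)
    (f : ℂ → (Fin n → ℂ)) (hf : DifferentiableOn ℂ f S) (hfD : ∀ ξ ∈ S, f ξ ∈ D)
    (ξ₀ : ℂ) (hξ₀ : ξ₀ ∈ S) (hd : deriv (fun ξ => f ξ ⟨0, hn⟩) ξ₀ ≠ 0)
    (ψ : (Fin n → ℂ) → lp (fun _ : ℕ => ℂ) 2)
    (α : ℕ → ℕ) (hα : Function.Injective α)
    (P : ℕ → Polynomial ℂ) (hP : LinearIndependent ℂ P)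
    (hψ : ∀ z ∈ D, ∀ k : ℕ, (ψ z : ℕ → ℂ) (α k) = (P k).eval (z ⟨0, hn⟩)) :
    ¬ FiniteDimensional ℂ ↥(Submodule.span ℂ ((fun ξ : ℂ => ψ (f ξ)) '' S)) := by
  intro hfin
  set g : ℂ → ℂ := fun ξ => f ξ ⟨0, hn⟩ with hgdef
  have hgc : ContinuousOn g S :=
    (continuous_apply (⟨0, hn⟩ : Fin n)).comp_continuousOn hf.continuousOn
  -- Step 1 : `g '' S` is infinite.
  have hginf : (g '' S).Infinite := by
    by_cases hconst : ∀ ξ ∈ S, g ξ = g ξ₀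
    · exfalso
      apply hd
      have hev : g =ᶠ[nhds ξ₀] fun _ => g ξ₀ :=
        Filter.eventuallyEq_of_mem (hSo.mem_nhds hξ₀) hconst
      have := hev.deriv_eq
      rw [deriv_const] at this
      exact this
    · push_neg at hconst
      obtain ⟨ξ₁, hξ₁S, hne⟩ := hconst
      set h : ℂ → ℝ := fun ξ => ‖g ξ - g ξ₀‖ with hhdef
      have hhc : ContinuousOn h S := (hgc.sub continuousOn_const).norm
      have hpre : IsPreconnected (h '' S) := hSc.isPreconnected.image h hhc
      have h0 : (0 : ℝ) ∈ h '' S := ⟨ξ₀, hξ₀, by simp [hhdef]⟩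
      have hd1 : ‖g ξ₁ - g ξ₀‖ ∈ h '' S := ⟨ξ₁, hξ₁S, rfl⟩
      have hIcc : Set.Icc (0 : ℝ) ‖g ξ₁ - g ξ₀‖ ⊆ h '' S := hpre.Icc_subset h0 hd1
      have hpos : (0 : ℝ) < ‖g ξ₁ - g ξ₀‖ := norm_pos_iff.mpr (sub_ne_zero.mpr hne)
      have hhinf : (h '' S).Infinite := (Set.Icc_infinite hpos).mono hIcc
      have him : h '' S = (fun x => ‖x - g ξ₀‖) '' (g '' S) := by
        rw [Set.image_image]
      rw [him] at hhinf
      exact hhinf.of_image _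
  -- Step 2 : coordinate functionals on the span.
  set V := Submodule.span ℂ ((fun ξ : ℂ => ψ (f ξ)) '' S) with hV
  let E : ℕ → (lp (fun _ : ℕ => ℂ) 2 →ₗ[ℂ] ℂ) := fun j =>
    { toFun := fun x => (x : ℕ → ℂ) j
      map_add' := fun x y => by
        simpa using congrFun (lp.coeFn_add x y) j
      map_smul' := fun c x => by
        simpa using congrFun (lp.coeFn_smul c x) j }
  let Φ : ℕ → (V →ₗ[ℂ] ℂ) := fun k => (E (α k)).comp V.subtype
  have hdep : ¬ LinearIndependent ℂ Φ :=
    Module.Finite.not_linearIndependent_of_infinite Φ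
  rw [linearIndependent_iff] at hdep
  push_neg at hdep
  obtain ⟨c, hc0, hcne⟩ := hdep
  set Q : Polynomial ℂ := Finsupp.linearCombination ℂ P c with hQdef
  have hQ : Q ≠ 0 := fun h => hcne (linearIndependent_iff.mp hP c h)
  -- Step 3 : every point of `g '' S` is a root of `Q`.
  have hroot : ∀ ξ ∈ S, Q.eval (g ξ) = 0 := by
    intro ξ hξ
    have hmem : ψ (f ξ) ∈ V := Submodule.subset_span (Set.mem_image_of_mem _ hξ)
    have happ := congrArg (fun (L : V →ₗ[ℂ] ℂ) => L ⟨ψ (f ξ), hmem⟩) hc0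
    simp only [Finsupp.linearCombination_apply, Finsupp.sum, LinearMap.coe_sum,
      Finset.sum_apply, LinearMap.smul_apply, LinearMap.zero_apply, smul_eq_mul] at happ
    have hΦ : ∀ k : ℕ, Φ k ⟨ψ (f ξ), hmem⟩ = (P k).eval (g ξ) := by
      intro k
      exact hψ (f ξ) (hfD ξ hξ) k
    rw [hQdef, Finsupp.linearCombination_apply, Finsupp.sum,
      Polynomial.eval_finset_sum]
    simp only [Polynomial.eval_smul, smul_eq_mul]
    calc (∑ k ∈ c.support, c k * (P k).eval (g ξ))
        = ∑ k ∈ c.support, c k * Φ k ⟨ψ (f ξ), hmem⟩ := by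
          refine Finset.sum_congr rfl fun k _ => by rw [hΦ k]
      _ = 0 := happ
  have hsub : g '' S ⊆ {x | Q.IsRoot x} := by
    rintro x ⟨ξ, hξ, rfl⟩
    exact hroot ξ hξ
  exact hginf ((Polynomial.finite_setOf_isRoot hQ).subset hsub)
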